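/- Deterministic ℓ∞ error bound for the weighted Group Lasso: let a ∈ (0,1) and λ > 0, let β̂ be any global minimizer over ℝ^p of β ↦ ℓ(β) + λ Σ_{k=1}^r ‖W_k β_k‖₂, and suppose |W⁻¹Xᵀε|_∞ ≤ aλ and ζ_{a,W} > 0. Then |β̂ − β̊|_∞ ≤ (1+a)λ/ζ_{a,W}. -/

import Mathlib

open scoped BigOperators

/-- Weighted group ℓ₂ norm ‖W_k β_k‖₂ of the subvector of `β` on group `G`. -/
noncomputable def gnorm {p : ℕ} (w β : Fin p → ℝ) (G : Finset (Fin p)) : ℝ :=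
  Real.sqrt (∑ j ∈ G, (w j * β j) ^ 2)

/-- Quadratic loss ℓ(β) = ‖Xβ‖₂²/2 − yᵀXβ. -/
noncomputable def qloss {n p : ℕ} (X : Matrix (Fin n) (Fin p) ℝ) (y : Fin n → ℝ)
    (β : Fin p → ℝ) : ℝ :=
  (∑ i, (X.mulVec β i) ^ 2) / 2 - ∑ i, y i * X.mulVec β i

/-- The ℓ∞ norm of a vector. -/
noncomputable def linf {p : ℕ} (v : Fin p → ℝ) : ℝ := ⨆ j, |v j|

/-- The cone C_{a,W}. -/
def inCone {p r : ℕ} (w : Fin p → ℝ) (G : Fin r → Finset (Fin p))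
    (S : Finset (Fin r)) (a : ℝ) (v : Fin p → ℝ) : Prop :=
  ∑ k ∈ Sᶜ, gnorm w v (G k) ≤ ∑ k ∈ S, gnorm w v (G k) + a * ∑ j, |w j * v j|

/-- The cone invertibility factor ζ_{a,W} = inf over nonzero v in the cone of
|W⁻¹XᵀXv|_∞ / |v|_∞. -/
noncomputable def cif {n p r : ℕ} (X : Matrix (Fin n) (Fin p) ℝ) (w : Fin p → ℝ)
    (G : Fin r → Finset (Fin p)) (S : Finset (Fin r)) (a : ℝ) : ℝ :=
  sInf ((fun v => linf (fun j => (X.transpose.mulVec (X.mulVec v)) j / w j) / linf v) ''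
    {v | inCone w G S a v ∧ v ≠ 0})

noncomputable def gv {p : ℕ} (w β : Fin p → ℝ) (G : Finset (Fin p)) : EuclideanSpace ℝ G :=
  WithLp.toLp 2 (fun j => w j * β j)

lemma gnorm_eq_norm {p : ℕ} (w β : Fin p → ℝ) (G : Finset (Fin p)) :
    gnorm w β G = ‖gv w β G‖ := by
  rw [EuclideanSpace.norm_eq, gnorm, ← Finset.sum_coe_sort]
  simp only [gv, PiLp.toLp_apply, Real.norm_eq_abs, ← abs_mul, sq_abs]

lemma gnorm_nonneg {p : ℕ} (w β : Fin p → ℝ) (G : Finset (Fin p)) : 0 ≤ gnorm w β G :=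
  Real.sqrt_nonneg _

lemma gnorm_add_le {p : ℕ} (w β γ : Fin p → ℝ) (G : Finset (Fin p)) :
    gnorm w (β + γ) G ≤ gnorm w β G + gnorm w γ G := by
  rw [gnorm_eq_norm, gnorm_eq_norm, gnorm_eq_norm]
  have : gv w (β + γ) G = gv w β G + gv w γ G := by
    ext j; show w j * (β j + γ j) = w j * β j + w j * γ j; ring
  rw [this]; exact norm_add_le _ _

lemma gnorm_sub_le {p : ℕ} (w β γ : Fin p → ℝ) (G : Finset (Fin p)) :
    gnorm w β G - gnorm w γ G ≤ gnorm w (β - γ) G := by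
  rw [gnorm_eq_norm, gnorm_eq_norm, gnorm_eq_norm]
  have : gv w (β - γ) G = gv w β G - gv w γ G := by
    ext j; show w j * (β j - γ j) = w j * β j - w j * γ j; ring
  rw [this]; exact norm_sub_norm_le _ _

lemma gnorm_congr {p : ℕ} (w β γ : Fin p → ℝ) (G : Finset (Fin p))
    (h : ∀ j ∈ G, β j = γ j) : gnorm w β G = gnorm w γ G := by
  unfold gnorm; congr 1; exact Finset.sum_congr rfl fun j hj => by rw [h j hj]

lemma gnorm_zero {p : ℕ} (w β : Fin p → ℝ) (G : Finset (Fin p))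
    (h : ∀ j ∈ G, β j = 0) : gnorm w β G = 0 := by
  rw [gnorm_congr w β 0 G h]; simp [gnorm]

lemma gnorm_single_mem {p : ℕ} (w : Fin p → ℝ) (hw : ∀ j, 0 < w j) (j : Fin p) (t : ℝ)
    (G : Finset (Fin p)) (hj : j ∈ G) : gnorm w (Pi.single j t) G = |t| * w j := by
  unfold gnorm
  rw [Finset.sum_eq_single_of_mem j hj (fun b _ hb => by simp [Pi.single_apply, hb])]
  rw [Pi.single_eq_same, Real.sqrt_sq_eq_abs, abs_mul, abs_of_pos (hw j)]
  ring

lemma gnorm_single_not_mem {p : ℕ} (w : Fin p → ℝ) (j : Fin p) (t : ℝ)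
    (G : Finset (Fin p)) (hj : j ∉ G) : gnorm w (Pi.single j t) G = 0 := by
  apply gnorm_zero
  intro i hi
  have : i ≠ j := fun h => hj (h ▸ hi)
  exact Pi.single_eq_of_ne this _

lemma gnorm_neg {p : ℕ} (w β : Fin p → ℝ) (G : Finset (Fin p)) :
    gnorm w (-β) G = gnorm w β G := by
  unfold gnorm; congr 1; exact Finset.sum_congr rfl fun j _ => by
    simp only [Pi.neg_apply]; ring

lemma qloss_expand {n p : ℕ} (X : Matrix (Fin n) (Fin p) ℝ) (y : Fin n → ℝ)
    (γ d : Fin p → ℝ) :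
    qloss X y (γ + d) = qloss X y γ + (∑ i, (X.mulVec d i) ^ 2) / 2
      + ∑ i, X.mulVec d i * (X.mulVec γ i - y i) := by
  unfold qloss
  rw [Matrix.mulVec_add]
  simp only [Pi.add_apply]
  rw [show ∀ A D Y : Fin n → ℝ,
      (∑ i, (A i + D i)^2)/2 - ∑ i, Y i * (A i + D i)
      = ((∑ i, (A i)^2)/2 - ∑ i, Y i * A i) + (∑ i, (D i)^2)/2
        + ∑ i, D i * (A i - Y i) from ?_]
  intro A D Y
  have h1 : ∑ i, (A i + D i)^2 = ∑ i, ((A i)^2 + (D i)^2 + 2 * (A i * D i)) :=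
    Finset.sum_congr rfl fun i _ => by ring
  have h2 : ∑ i, Y i * (A i + D i) = ∑ i, (Y i * A i + Y i * D i) :=
    Finset.sum_congr rfl fun i _ => by ring
  have h3 : ∑ i, D i * (A i - Y i) = ∑ i, (A i * D i - Y i * D i) :=
    Finset.sum_congr rfl fun i _ => by ring
  rw [h1, h2, h3]
  simp only [Finset.sum_add_distrib, Finset.sum_sub_distrib]
  rw [show ∑ i, 2 * (A i * D i) = 2 * ∑ i, A i * D i by rw [Finset.mul_sum]]
  ring

lemma abs_le_linf {p : ℕ} (v : Fin p → ℝ) (j : Fin p) : |v j| ≤ linf v := by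
  unfold linf
  exact le_ciSup (f := fun j => |v j|) (Set.Finite.bddAbove (Set.finite_range _)) j

lemma linf_le {p : ℕ} [Nonempty (Fin p)] (v : Fin p → ℝ) (c : ℝ)
    (h : ∀ j, |v j| ≤ c) : linf v ≤ c := ciSup_le h

set_option maxHeartbeats 1600000 in
theorem stmt2 {n p r : ℕ} (hn : 0 < n) (hp : 0 < p) (hr : 0 < r)
    (X : Matrix (Fin n) (Fin p) ℝ)
    (G : Fin r → Finset (Fin p))
    (hGne : ∀ k, (G k).Nonempty)
    (hGdisj : ∀ k₁ k₂, k₁ ≠ k₂ → Disjoint (G k₁) (G k₂))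
    (hGcover : ∀ j, ∃ k, j ∈ G k)
    (w : Fin p → ℝ) (hw : ∀ j, 0 < w j)
    (βo : Fin p → ℝ) (ε : Fin n → ℝ) (y : Fin n → ℝ)
    (hy : y = X.mulVec βo + ε)
    (S : Finset (Fin r)) (hS : ∀ k, k ∈ S ↔ ∃ j ∈ G k, βo j ≠ 0)
    (a : ℝ) (ha : a ∈ Set.Ioo (0 : ℝ) 1)
    (lam : ℝ) (hlam : 0 < lam)
    (hnoise : ∀ j, |∑ i, X i j * ε i| ≤ a * lam * w j)
    (hzeta : 0 < cif X w G S a)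
    (βh : Fin p → ℝ)
    (hmin : ∀ β : Fin p → ℝ,
      qloss X y βh + lam * ∑ k, gnorm w βh (G k) ≤
        qloss X y β + lam * ∑ k, gnorm w β (G k)) :
    linf (βh - βo) ≤ (1 + a) * lam / cif X w G S a := by
  have : Nonempty (Fin p) := ⟨⟨0, hp⟩⟩
  obtain ⟨ha0, ha1⟩ := ha
  set v : Fin p → ℝ := βh - βo with hv
  -- the KKT-type coordinatewise gradient bound
  set g : Fin p → ℝ := fun j => ∑ i, X i j * (X.mulVec βh i - y i) with hgdef
  have hg : ∀ j, |g j| ≤ lam * w j := by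
    intro j
    set c : ℝ := ∑ i, (X i j) ^ 2 with hcdef
    have hc : 0 ≤ c := Finset.sum_nonneg fun i _ => sq_nonneg _
    have key : ∀ t : ℝ, 0 ≤ t * g j + t ^ 2 * c / 2 + lam * (|t| * w j) := by
      intro t
      have hmv : ∀ i, X.mulVec (Pi.single j t) i = X i j * t := by
        intro i
        simp [Matrix.mulVec, dotProduct, Pi.single_apply,
          Finset.sum_ite_eq, mul_comm]
      have hq : qloss X y (βh + Pi.single j t)
          = qloss X y βh + t ^ 2 * c / 2 + t * g j := by
        rw [qloss_expand]
        have e1 : ∑ i, (X.mulVec (Pi.single j t) i) ^ 2 = t ^ 2 * c := by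
          rw [hcdef, Finset.mul_sum]
          exact Finset.sum_congr rfl fun i _ => by rw [hmv i]; ring
        have e2 : ∑ i, X.mulVec (Pi.single j t) i * (X.mulVec βh i - y i)
            = t * g j := by
          rw [hgdef, Finset.mul_sum]
          exact Finset.sum_congr rfl fun i _ => by rw [hmv i]; ring
        rw [e1, e2]
      have hpen : ∑ k, gnorm w (βh + Pi.single j t) (G k)
          ≤ (∑ k, gnorm w βh (G k)) + |t| * w j := by
        obtain ⟨k0, hk0⟩ := hGcover j
        have hsingle : ∑ k, gnorm w (Pi.single j t) (G k) = |t| * w j := by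
          rw [Finset.sum_eq_single_of_mem k0 (Finset.mem_univ _)]
          · exact gnorm_single_mem w hw j t (G k0) hk0
          · intro k _ hk
            exact gnorm_single_not_mem w j t (G k)
              fun hmem => Finset.disjoint_left.mp (hGdisj k k0 hk) hmem hk0
        refine le_trans (Finset.sum_le_sum fun k _ => gnorm_add_le w βh (Pi.single j t) (G k)) ?_
        rw [Finset.sum_add_distrib, hsingle]
      have hm := hmin (βh + Pi.single j t)
      rw [hq] at hm
      have hp2 : lam * ∑ k, gnorm w (βh + Pi.single j t) (G k)
          ≤ lam * ∑ k, gnorm w βh (G k) + lam * (|t| * w j) := by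
        rw [← mul_add]
        exact mul_le_mul_of_nonneg_left hpen hlam.le
      linarith
    have keyeps : ∀ s : ℝ, 0 < s → |g j| ≤ lam * w j + s * c / 2 := by
      intro s hs
      have h1 := key s
      have h2 := key (-s)
      rw [abs_of_pos hs] at h1
      rw [abs_neg, abs_of_pos hs] at h2
      rw [abs_le]
      constructor <;> nlinarith
    by_contra hcon
    push_neg at hcon
    have hd : 0 < (|g j| - lam * w j) := by linarith
    have hs : 0 < (|g j| - lam * w j) / (c + 1) := by positivity
    have := keyeps _ hs
    have hcle : ((|g j| - lam * w j) / (c + 1)) * c / 2 < |g j| - lam * w j := by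
      rw [div_mul_eq_mul_div, div_div, div_lt_iff₀ (by positivity)]
      nlinarith [mul_pos hd (show (0:ℝ) < c + 2 by linarith)]
    linarith
  -- notation for the noise vector
  set xe : Fin p → ℝ := fun j => ∑ i, X i j * ε i with hxedef
  -- loss difference identity
  have hsum_swap : ∑ i, X.mulVec v i * ε i = ∑ j, xe j * v j := by
    have : ∀ i, X.mulVec v i * ε i = ∑ j, X i j * v j * ε i := by
      intro i
      rw [show X.mulVec v i = ∑ j, X i j * v j from rfl, Finset.sum_mul]
    rw [Finset.sum_congr rfl fun i _ => this i, Finset.sum_comm]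
    exact Finset.sum_congr rfl fun j _ => by
      rw [hxedef, Finset.sum_mul]
      exact Finset.sum_congr rfl fun i _ => by ring
  -- cone membership
  have hcone : inCone w G S a v := by
    have hq : qloss X y βh = qloss X y βo + (∑ i, (X.mulVec v i) ^ 2) / 2
        - ∑ j, xe j * v j := by
      have hb : βh = βo + v := by funext i; simp [hv]
      rw [hb, qloss_expand, ← hsum_swap]
      have : ∀ i, X.mulVec v i * (X.mulVec βo i - y i) = -(X.mulVec v i * ε i) := by
        intro i; rw [hy]; simp only [Pi.add_apply]; ring
      rw [Finset.sum_congr rfl fun i _ => this i, Finset.sum_neg_distrib]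
      ring
    have hN : ∑ j, xe j * v j ≤ a * lam * ∑ j, |w j * v j| := by
      rw [Finset.mul_sum]
      apply Finset.sum_le_sum
      intro j _
      calc xe j * v j ≤ |xe j * v j| := le_abs_self _
        _ = |xe j| * |v j| := abs_mul _ _
        _ ≤ (a * lam * w j) * |v j| := by
            apply mul_le_mul_of_nonneg_right (hnoise j) (abs_nonneg _)
        _ = a * lam * |w j * v j| := by
            rw [abs_mul, abs_of_pos (hw j)]; ring
    have hQ : 0 ≤ (∑ i, (X.mulVec v i) ^ 2) / 2 := by positivity
    have hmino := hmin βo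
    rw [hq] at hmino
    -- lam * Ω βh ≤ lam * Ω βo + N
    have hΩ : ∑ k, gnorm w βh (G k)
        ≤ ∑ k, gnorm w βo (G k) + a * ∑ j, |w j * v j| := by
      have hN2 : ∑ j, xe j * v j ≤ lam * (a * ∑ j, |w j * v j|) := by
        rw [show lam * (a * ∑ j, |w j * v j|) = a * lam * ∑ j, |w j * v j| by ring]
        exact hN
      have hNQ : lam * ∑ k, gnorm w βh (G k)
          ≤ lam * ((∑ k, gnorm w βo (G k)) + a * ∑ j, |w j * v j|) := by
        rw [mul_add]
        linarith
      exact le_of_mul_le_mul_left hNQ hlam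
    -- split into S and Sᶜ
    have hsplit : ∀ β : Fin p → ℝ, ∑ k, gnorm w β (G k)
        = ∑ k ∈ S, gnorm w β (G k) + ∑ k ∈ Sᶜ, gnorm w β (G k) := by
      intro β
      rw [Finset.sum_add_sum_compl]
    have hβoSc : ∀ k ∈ Sᶜ, gnorm w βo (G k) = 0 := by
      intro k hk
      apply gnorm_zero
      intro i hi
      by_contra hne
      exact (Finset.mem_compl.mp hk) ((hS k).mpr ⟨i, hi, hne⟩)
    have hβhSc : ∀ k ∈ Sᶜ, gnorm w βh (G k) = gnorm w v (G k) := by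
      intro k hk
      apply gnorm_congr
      intro i hi
      have : βo i = 0 := by
        by_contra hne
        exact (Finset.mem_compl.mp hk) ((hS k).mpr ⟨i, hi, hne⟩)
      simp [hv, this]
    have hrev : ∀ k, gnorm w βo (G k) - gnorm w βh (G k) ≤ gnorm w v (G k) := by
      intro k
      calc gnorm w βo (G k) - gnorm w βh (G k) ≤ gnorm w (βo - βh) (G k) :=
            gnorm_sub_le _ _ _ _
        _ = gnorm w v (G k) := by
            rw [show βo - βh = -v by funext i; simp [hv], gnorm_neg]
    rw [hsplit βh, hsplit βo, Finset.sum_congr rfl hβhSc,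
      Finset.sum_eq_zero hβoSc] at hΩ
    unfold inCone
    have hSsum : ∑ k ∈ S, gnorm w βo (G k) - ∑ k ∈ S, gnorm w βh (G k)
        ≤ ∑ k ∈ S, gnorm w v (G k) := by
      rw [← Finset.sum_sub_distrib]
      exact Finset.sum_le_sum fun k _ => hrev k
    linarith
  -- final step
  rcases eq_or_ne v 0 with hv0 | hv0
  · rw [hv0]
    have : linf (0 : Fin p → ℝ) = 0 := by
      unfold linf; simp
    rw [this]
    positivity
  · -- v ≠ 0
    have hlinfv : 0 < linf v := by
      obtain ⟨j0, hj0⟩ := Function.ne_iff.mp hv0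
      exact lt_of_lt_of_le (abs_pos.mpr hj0) (abs_le_linf v j0)
    set L : ℝ := linf (fun j => (X.transpose.mulVec (X.mulVec v)) j / w j) with hLdef
    have hLb : L ≤ (1 + a) * lam := by
      apply linf_le
      intro j
      have hnum : X.transpose.mulVec (X.mulVec v) j = g j + xe j := by
        rw [show X.transpose.mulVec (X.mulVec v) j
            = ∑ i, X i j * X.mulVec v i from rfl]
        have : ∀ i, X i j * X.mulVec v i
            = X i j * (X.mulVec βh i - y i) + X i j * ε i := by
          intro i
          have : X.mulVec v i = X.mulVec βh i - X.mulVec βo i := by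
            rw [hv, Matrix.mulVec_sub]; rfl
          rw [this, hy]; simp only [Pi.add_apply]; ring
        rw [Finset.sum_congr rfl fun i _ => this i, Finset.sum_add_distrib]
      rw [hnum, abs_div, abs_of_pos (hw j), div_le_iff₀ (hw j)]
      calc |g j + xe j| ≤ |g j| + |xe j| := abs_add_le _ _
        _ ≤ lam * w j + a * lam * w j := add_le_add (hg j) (hnoise j)
        _ = (1 + a) * lam * w j := by ring
    have hmem : L / linf v ∈
        ((fun u => linf (fun j => (X.transpose.mulVec (X.mulVec u)) j / w j) / linf u) ''
          {u | inCone w G S a u ∧ u ≠ 0}) := ⟨v, ⟨hcone, hv0⟩, rfl⟩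
    have hbdd : BddBelow
        ((fun u => linf (fun j => (X.transpose.mulVec (X.mulVec u)) j / w j) / linf u) ''
          {u | inCone w G S a u ∧ u ≠ 0}) := by
      refine ⟨0, fun x hx => ?_⟩
      obtain ⟨u, _, rfl⟩ := hx
      have h1 : 0 ≤ linf (fun j => (X.transpose.mulVec (X.mulVec u)) j / w j) :=
        le_trans (abs_nonneg _) (abs_le_linf _ ⟨0, hp⟩)
      have h2 : 0 ≤ linf u := le_trans (abs_nonneg _) (abs_le_linf _ ⟨0, hp⟩)
      exact div_nonneg h1 h2
    have hcif_le : cif X w G S a ≤ L / linf v := csInf_le hbdd hmem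
    rw [le_div_iff₀ hlinfv] at hcif_le
    rw [le_div_iff₀ hzeta]
    nlinarith
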